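/- Let A be an n×n matrix with eigenvalues λ₁,…,λₙ (listed with multiplicity). Define P₀ = I and P_k = ∏_{j=1}^k (A − λ_j I) for k = 1,…,n−1, and let r₁,…,rₙ satisfy r₁' = λ₁ r₁, r₁(0)=1, and r_k' = λ_k r_k + r_{k−1}, r_k(0)=0 for k ≥ 2. Then exp(A t) = Σ_{k=1}^n r_k(t)·P_{k−1} for all t. -/

import Mathlib

open NormedSpace

/-- Putzer's spectral formula for the matrix exponential. -/
theorem putzer_spectral_formula
    (n : ℕ) (hn : 0 < n) (A : Matrix (Fin n) (Fin n) ℂ) (lam : ℕ → ℂ)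
    (hchar : A.charpoly = ∏ j ∈ Finset.range n,
      (Polynomial.X - Polynomial.C (lam j)))
    (P : ℕ → Matrix (Fin n) (Fin n) ℂ)
    (hP0 : P 0 = 1)
    (hPsucc : ∀ k, P (k + 1) = P k * (A - lam k • (1 : Matrix (Fin n) (Fin n) ℂ)))
    (r : ℕ → ℝ → ℂ)
    (hr0_init : r 0 0 = 1)
    (hr0_deriv : ∀ t : ℝ, HasDerivAt (r 0) (lam 0 * r 0 t) t)
    (hrk_init : ∀ k, 1 ≤ k → r k 0 = 0)
    (hrk_deriv : ∀ k, 1 ≤ k → ∀ t : ℝ,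
      HasDerivAt (r k) (lam k * r k t + r (k - 1) t) t)
    (t : ℝ) :
    exp ((t : ℂ) • A) = ∑ k ∈ Finset.range n, r k t • P k := by
  letI : SeminormedRing (Matrix (Fin n) (Fin n) ℂ) := Matrix.linftyOpSemiNormedRing
  letI : NormedRing (Matrix (Fin n) (Fin n) ℂ) := Matrix.linftyOpNormedRing
  letI : NormedAlgebra ℂ (Matrix (Fin n) (Fin n) ℂ) := Matrix.linftyOpNormedAlgebra
  -- P k is a polynomial in A
  have haeval : ∀ k, P k = Polynomial.aeval A (∏ j ∈ Finset.range k,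
      (Polynomial.X - Polynomial.C (lam j))) := by
    intro k
    induction k with
    | zero => simp [hP0]
    | succ k ih =>
      rw [Finset.prod_range_succ, map_mul, ← ih, hPsucc]
      congr 1
      simp [map_sub, Polynomial.aeval_X, Polynomial.aeval_C, Algebra.algebraMap_eq_smul_one]
  have hPn : P n = 0 := by
    rw [haeval n, ← hchar, Matrix.aeval_self_charpoly]
  -- A commutes with each P k
  have hAA : ∀ c : ℂ, A * (A - c • 1) = (A - c • 1) * A := by
    intro c
    rw [mul_sub, sub_mul, mul_smul_comm, smul_mul_assoc, mul_one, one_mul]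
  have hcomm : ∀ k, A * P k = P k * A := by
    intro k
    induction k with
    | zero => simp [hP0]
    | succ k ih => rw [hPsucc, ← mul_assoc, ih, mul_assoc, hAA, mul_assoc]
  have hPA : ∀ k, P k * A = P (k + 1) + lam k • P k := by
    intro k
    rw [hPsucc, mul_sub, mul_smul_comm, mul_one]
    abel
  -- The candidate solution
  set Φ : ℝ → Matrix (Fin n) (Fin n) ℂ := fun s => ∑ k ∈ Finset.range n, r k s • P k with hΦ
  have hΦ0 : Φ 0 = 1 := by
    simp only [hΦ]
    rw [Finset.sum_eq_single_of_mem 0 (Finset.mem_range.2 hn)]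
    · rw [hr0_init, hP0, one_smul]
    · intro k _ hk
      rw [hrk_init k (Nat.one_le_iff_ne_zero.2 hk), zero_smul]
  -- Φ satisfies Φ' = A Φ
  have hΦderiv : ∀ s : ℝ, HasDerivAt Φ (A * Φ s) s := by
    intro s
    have h1 : HasDerivAt Φ (∑ k ∈ Finset.range n,
        (lam k * r k s + if k = 0 then 0 else r (k - 1) s) • P k) s := by
      apply HasDerivAt.fun_sum
      intro k _
      rcases Nat.eq_zero_or_pos k with hk | hk
      · subst hk
        simpa using (hr0_deriv s).smul_const (P 0)
      · have := (hrk_deriv k hk s).smul_const (P k)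
        simpa [Nat.pos_iff_ne_zero.mp hk] using this
    convert h1 using 1
    -- algebraic identity
    have hsplit : ∀ k, (lam k * r k s + if k = 0 then 0 else r (k - 1) s) • P k
        = (lam k * r k s) • P k + (if k = 0 then 0 else r (k - 1) s • P k) := by
      intro k
      rw [add_smul]
      congr 1
      split <;> simp
    have htel : (∑ k ∈ Finset.range n, if k = 0 then (0 : Matrix (Fin n) (Fin n) ℂ) else r (k - 1) s • P k)
        = ∑ k ∈ Finset.range n, r k s • P (k + 1) := by
      set e : ℕ → Matrix (Fin n) (Fin n) ℂ := fun k => if k = 0 then (0 : Matrix (Fin n) (Fin n) ℂ) else r (k - 1) s • P k with he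
      have he0 : e 0 = 0 := by simp [he]
      have hen : e n = 0 := by
        simp [he, Nat.pos_iff_ne_zero.mp hn, hPn]
      have hes : ∀ k, e (k + 1) = r k s • P (k + 1) := by
        intro k; simp [he]
      have hkey : (∑ k ∈ Finset.range n, e k) + e n
          = (∑ k ∈ Finset.range n, e (k + 1)) + e 0 := by
        rw [← Finset.sum_range_succ, Finset.sum_range_succ']
      rw [hen, add_zero, he0, add_zero] at hkey
      rw [hkey]
      exact Finset.sum_congr rfl fun k _ => hes k
    rw [hΦ, Finset.mul_sum]
    calc (∑ k ∈ Finset.range n, A * (r k s • P k))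
        = ∑ k ∈ Finset.range n, ((lam k * r k s) • P k + r k s • P (k + 1)) := by
          apply Finset.sum_congr rfl
          intro k _
          rw [mul_smul_comm, hcomm, hPA, smul_add, smul_smul, mul_comm (r k s)]
          abel
      _ = (∑ k ∈ Finset.range n, (lam k * r k s) • P k)
          + ∑ k ∈ Finset.range n, r k s • P (k + 1) := Finset.sum_add_distrib
      _ = ∑ k ∈ Finset.range n,
            (lam k * r k s + if k = 0 then 0 else r (k - 1) s) • P k := by
          rw [← htel, ← Finset.sum_add_distrib]
          exact (Finset.sum_congr rfl fun k _ => (hsplit k)).symm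
  -- derivative of the matrix exponential
  have hE : ∀ s : ℝ, HasDerivAt (fun u : ℝ => exp ((u : ℂ) • A))
      (exp ((s : ℂ) • A) * A) s := by
    intro s
    have h1 : HasDerivAt (fun u : ℂ => exp (u • A))
        (exp ((s : ℂ) • A) * A) ((s : ℝ) : ℂ) := hasDerivAt_exp_smul_const A _
    have h2 : HasDerivAt (fun u : ℝ => ((u : ℝ) : ℂ)) 1 s := by
      exact (Complex.ofRealCLM.hasDerivAt (x := s)).congr_deriv (by simp)
    exact (HasDerivAt.scomp s h1 h2).congr_deriv (by simp)
  -- the function exp(-sA) * Φ s has zero derivative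
  have hEn : ∀ s : ℝ, HasDerivAt (fun u : ℝ => exp ((-(u : ℂ)) • A))
      (-(exp ((-(s : ℂ)) • A) * A)) s := by
    intro s
    have h1 : HasDerivAt (fun u : ℂ => exp (u • A))
        (exp ((-(s : ℂ)) • A) * A) (-(s : ℂ)) := hasDerivAt_exp_smul_const A _
    have h2 : HasDerivAt (fun u : ℝ => -(u : ℂ)) (-1) s := by
      exact (Complex.ofRealCLM.hasDerivAt (x := s)).neg.congr_deriv (by simp)
    have h3 := HasDerivAt.scomp s h1 h2
    exact h3.congr_deriv (by simp [Function.comp_def, neg_smul, one_smul])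
  set g : ℝ → Matrix (Fin n) (Fin n) ℂ :=
    fun s => exp ((-(s : ℂ)) • A) * Φ s with hg
  have hgderiv : ∀ s : ℝ, HasDerivAt g 0 s := by
    intro s
    have h := (hEn s).mul (hΦderiv s)
    have heq : -(exp ((-(s : ℂ)) • A) * A) * Φ s
        + exp ((-(s : ℂ)) • A) * (A * Φ s) = 0 := by
      rw [neg_mul, mul_assoc, neg_add_cancel]
    rw [heq] at h
    exact h
  have hgconst : g t = g 0 :=
    is_const_of_deriv_eq_zero (fun s => (hgderiv s).differentiableAt)
      (fun s => (hgderiv s).deriv) t 0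
  have hg0 : g 0 = 1 := by
    simp [hg, hΦ0, exp_zero]
  have hcomm2 : Commute ((t : ℂ) • A) ((-(t : ℂ)) • A) :=
    ((Commute.refl A).smul_left _).smul_right _
  have hinv : exp ((t : ℂ) • A) * exp ((-(t : ℂ)) • A) = 1 := by
    rw [← Matrix.exp_add_of_commute _ _ hcomm2, ← add_smul, add_neg_cancel, zero_smul, exp_zero]
  have key : exp ((-(t : ℂ)) • A) * Φ t = 1 := hgconst.trans hg0
  calc exp ((t : ℂ) • A)
      = exp ((t : ℂ) • A) * (exp ((-(t : ℂ)) • A) * Φ t) := by rw [key, mul_one]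
    _ = (exp ((t : ℂ) • A) * exp ((-(t : ℂ)) • A)) * Φ t := by rw [mul_assoc]
    _ = Φ t := by rw [hinv, one_mul]
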